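/- arXiv:1311.3749 — 2 statements merged into one kernel-verified Lean document; each statement's English description precedes it below -/
import Mathlib

section
/- In the functional-router model with initial condition χ^{(0)} = μ^{(0)}, for any w ∈ V and T ≥ 0: χ^{(T)}_w − μ^{(T)}_w = Σ_{t=0}^{T−1} Σ_{u∈V} Σ_{v∈N(u)} (Z^{(t)}_{v,u} − χ^{(t)}_v P_{v,u})(P^{T−t−1}_{u,w} − π_w). -/
open Finset Matrix

/-- Key lemma for the functional-router model: exact expression of the discrepancy
`χ^{(T)}_w − μ^{(T)}_w`. -/
theorem stmt_7 {V : Type*} [Fintype V] [DecidableEq V]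
    (P : Matrix V V ℝ) (π : V → ℝ)
    (hP0 : ∀ u v, 0 ≤ P u v) (hP1 : ∀ u, ∑ v, P u v = 1)
    (hπ0 : ∀ v, 0 ≤ π v) (hπ1 : ∑ v, π v = 1)
    (hstat : π ᵥ* P = π)
    (hrev : ∀ u v, π u * P u v = π v * P v u)
    (χ : ℕ → V → ℕ) (Z : ℕ → V → V → ℕ)
    (hupd : ∀ t u, χ (t + 1) u = ∑ v, Z t v u)
    (hout : ∀ t v, ∑ u, Z t v u = χ t v)
    (hsupp : ∀ t v u, P v u = 0 → Z t v u = 0) :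
    ∀ (w : V) (T : ℕ),
      (χ T w : ℝ) - ((fun v => (χ 0 v : ℝ)) ᵥ* P ^ T) w =
        ∑ t ∈ Finset.range T, ∑ u, ∑ v ∈ Finset.univ.filter (fun v => 0 < P v u),
          ((Z t v u : ℝ) - (χ t v : ℝ) * P v u) * ((P ^ (T - t - 1)) u w - π w) := by
  intro w T
  set A : ℕ → ℝ := fun t => ((fun v => (χ t v : ℝ)) ᵥ* P ^ (T - t)) w with hA
  have hAT : A T = (χ T w : ℝ) := by
    simp [hA, Nat.sub_self, Matrix.vecMul_one]
  have hA0 : A 0 = ((fun v => (χ 0 v : ℝ)) ᵥ* P ^ T) w := by simp [hA]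
  have key : ∀ t ∈ Finset.range T,
      (∑ u, ∑ v ∈ Finset.univ.filter (fun v => 0 < P v u),
        ((Z t v u : ℝ) - (χ t v : ℝ) * P v u) * ((P ^ (T - t - 1)) u w - π w))
      = A (t + 1) - A t := by
    intro t ht
    rw [Finset.mem_range] at ht
    -- extend filter to univ
    have hfull : ∀ u, (∑ v ∈ Finset.univ.filter (fun v => 0 < P v u),
        ((Z t v u : ℝ) - (χ t v : ℝ) * P v u) * ((P ^ (T - t - 1)) u w - π w))
        = ∑ v, ((Z t v u : ℝ) - (χ t v : ℝ) * P v u) * ((P ^ (T - t - 1)) u w - π w) := by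
      intro u
      refine Finset.sum_subset (Finset.filter_subset _ _) ?_
      intro v _ hv
      simp only [Finset.mem_filter, Finset.mem_univ, true_and, not_lt] at hv
      have hPz : P v u = 0 := le_antisymm hv (hP0 v u)
      rw [hsupp t v u hPz, hPz]
      simp
    simp only [hfull]
    have hrow : ∀ v, ∑ u, ((Z t v u : ℝ) - (χ t v : ℝ) * P v u) = 0 := by
      intro v
      rw [Finset.sum_sub_distrib, ← Finset.mul_sum, hP1, ← Nat.cast_sum, hout]
      ring
    have hzero : ∑ u, ∑ v, ((Z t v u : ℝ) - (χ t v : ℝ) * P v u) * π w = 0 := by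
      rw [Finset.sum_comm]
      have h : ∀ v, ∑ u, ((Z t v u : ℝ) - (χ t v : ℝ) * P v u) * π w = 0 := by
        intro v
        rw [← Finset.sum_mul, hrow]
        ring
      simp [h]
    have expand : ∑ u, ∑ v, ((Z t v u : ℝ) - (χ t v : ℝ) * P v u) * ((P ^ (T - t - 1)) u w - π w)
        = (∑ u, ∑ v, ((Z t v u : ℝ) - (χ t v : ℝ) * P v u) * (P ^ (T - t - 1)) u w)
          - ∑ u, ∑ v, ((Z t v u : ℝ) - (χ t v : ℝ) * P v u) * π w := by
      rw [← Finset.sum_sub_distrib]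
      refine Finset.sum_congr rfl fun u _ => ?_
      rw [← Finset.sum_sub_distrib]
      refine Finset.sum_congr rfl fun v _ => ?_
      ring
    rw [expand, hzero, sub_zero]
    have hTt : T - t = (T - t - 1) + 1 := by omega
    have hTt1 : T - (t + 1) = T - t - 1 := by omega
    have hpow : P ^ (T - t) = P * P ^ (T - t - 1) := by
      nth_rewrite 1 [hTt]; rw [pow_succ']
    have hA1 : A (t + 1) = ∑ u, (∑ v, (Z t v u : ℝ)) * (P ^ (T - t - 1)) u w := by
      simp [hA, hTt1, Matrix.vecMul, dotProduct, hupd]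
    have hAt : A t = ∑ u, ∑ v, ((χ t v : ℝ) * P v u) * (P ^ (T - t - 1)) u w := by
      rw [Finset.sum_comm]
      simp only [hA, hpow]
      simp [Matrix.vecMul, dotProduct, Matrix.mul_apply, Finset.mul_sum, mul_assoc]
    rw [hA1, hAt, ← Finset.sum_sub_distrib]
    refine Finset.sum_congr rfl fun u _ => ?_
    rw [Finset.sum_mul, ← Finset.sum_sub_distrib]
    refine Finset.sum_congr rfl fun v _ => ?_
    ring
  rw [Finset.sum_congr rfl key, Finset.sum_range_sub A T, hAT, hA0]
end

section
/- For the van der Corput function ψ, for any z ∈ ℤ_{≥0}, any k ∈ ℤ_{≥0}, and any i ∈ {0,1,…,2^k−1}, the set Φ[z, z+2^k) = {ψ(j) : z ≤ j < z+2^k} contains exactly one element of the dyadic interval [i/2^k, (i+1)/2^k). -/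
open Finset

/-- The van der Corput function `ψ`: binary digit reversal of the index.
(For `i ≥ 1` all binary digits of `i` have index `< i`, so summing over
`j < i` captures the full expansion; `ψ 0 = 0`.) -/
noncomputable def vdc (i : ℕ) : ℝ :=
  ∑ j ∈ Finset.range i, if i.testBit j then ((1 : ℝ) / 2) ^ (j + 1) else 0

/-- reversal of the low `k` bits of `j`. -/
def lowrev (k j : ℕ) : ℕ :=
  ∑ b ∈ Finset.range k, if j.testBit b then 2 ^ (k - 1 - b) else 0

lemma lowrev_rec (k j : ℕ) :
    lowrev (k + 1) j = (if j.testBit 0 then 2 ^ k else 0) + lowrev k (j / 2) := by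
  unfold lowrev
  rw [Finset.sum_range_succ' (fun b => if j.testBit b then 2 ^ (k + 1 - 1 - b) else 0) k]
  rw [add_comm]
  congr 1
  apply Finset.sum_congr rfl
  intro b _
  rw [Nat.testBit_succ]
  congr 2
  omega

lemma lowrev_lt (k : ℕ) : ∀ j, lowrev k j < 2 ^ k := by
  induction k with
  | zero => intro j; simp [lowrev]
  | succ k ih =>
    intro j
    rw [lowrev_rec]
    have := ih (j / 2)
    split <;> simp [pow_succ] <;> omega

lemma lowrev_inj (k : ℕ) : ∀ j1 j2, j1 < 2 ^ k → j2 < 2 ^ k →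
    lowrev k j1 = lowrev k j2 → j1 = j2 := by
  induction k with
  | zero => intro j1 j2 h1 h2 _; omega
  | succ k ih =>
    intro j1 j2 h1 h2 heq
    rw [lowrev_rec, lowrev_rec] at heq
    have l1 := lowrev_lt k (j1 / 2)
    have l2 := lowrev_lt k (j2 / 2)
    have hb : j1.testBit 0 = j2.testBit 0 := by
      by_contra hne
      rcases Bool.eq_false_or_eq_true (j1.testBit 0) with h | h <;>
        rcases Bool.eq_false_or_eq_true (j2.testBit 0) with h' | h' <;>
          simp [h, h'] at heq hne <;> omega
    have hlow : lowrev k (j1 / 2) = lowrev k (j2 / 2) := by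
      rw [hb] at heq; split at heq <;> omega
    have hdiv : j1 / 2 = j2 / 2 := by
      apply ih <;> [skip; skip; omega] <;> omega
    have hm : j1 % 2 = j2 % 2 := by
      rw [Nat.testBit_zero, Nat.testBit_zero] at hb
      simp only [decide_eq_decide] at hb
      omega
    omega

lemma lowrev_surj (k : ℕ) : ∀ i, i < 2 ^ k → ∃ j, j < 2 ^ k ∧ lowrev k j = i := by
  induction k with
  | zero => intro i hi; exact ⟨0, by omega, by simp [lowrev]; omega⟩
  | succ k ih =>
    intro i hi
    obtain ⟨j', hj', hval⟩ := ih (i % 2 ^ k) (Nat.mod_lt _ (Nat.pow_pos (by norm_num)))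
    have hle : i / 2 ^ k ≤ 1 := by
      have h2 : i / 2 ^ k < 2 := by
        rw [Nat.div_lt_iff_lt_mul (Nat.pow_pos (by norm_num))]
        rw [pow_succ] at hi; omega
      omega
    have hdm := Nat.mod_add_div i (2 ^ k)
    refine ⟨2 * j' + i / 2 ^ k, ?_, ?_⟩
    · rw [pow_succ]; omega
    · rw [lowrev_rec]
      have hd : (2 * j' + i / 2 ^ k) / 2 = j' := by
        rw [Nat.mul_add_div (by norm_num), Nat.div_eq_of_lt (by omega)]
        omega
      have hm : (2 * j' + i / 2 ^ k) % 2 = i / 2 ^ k := by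
        rw [Nat.mul_add_mod, Nat.mod_eq_of_lt (by omega)]
      rw [hd, hval, Nat.testBit_zero, hm]
      interval_cases h : i / 2 ^ k <;> simp <;> omega

lemma lowrev_mod (k j : ℕ) : lowrev k (j % 2 ^ k) = lowrev k j := by
  unfold lowrev
  apply Finset.sum_congr rfl
  intro b hb
  rw [Nat.testBit_mod_two_pow]
  simp [Finset.mem_range.mp hb]

lemma vdc_eq_sum (j n : ℕ) (h : j ≤ n) :
    vdc j = ∑ b ∈ Finset.range n, if j.testBit b then ((1 : ℝ) / 2) ^ (b + 1) else 0 := by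
  unfold vdc
  rw [← Finset.sum_range_add_sum_Ico _ h]
  have : ∑ b ∈ Finset.Ico j n, (if j.testBit b then ((1 : ℝ) / 2) ^ (b + 1) else 0) = 0 := by
    apply Finset.sum_eq_zero
    intro b hb
    have hlt : j < 2 ^ b := lt_of_lt_of_le (Nat.lt_two_pow_self (n := j))
      (Nat.pow_le_pow_right (by norm_num) (Finset.mem_Ico.mp hb).1)
    simp [Nat.testBit_eq_false_of_lt hlt]
  rw [this, add_zero]

lemma geom_half (m : ℕ) :
    ∑ b ∈ Finset.range m, ((1 : ℝ) / 2) ^ (b + 1) = 1 - (1 / 2) ^ m := by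
  induction m with
  | zero => simp
  | succ m ih => rw [Finset.sum_range_succ, ih]; ring

lemma vdc_bounds (k j : ℕ) :
    (lowrev k j : ℝ) / 2 ^ k ≤ vdc j ∧ vdc j < ((lowrev k j : ℝ) + 1) / 2 ^ k := by
  have hsum := vdc_eq_sum j (j + k) (by omega)
  have hsplit : ∑ b ∈ Finset.range (j + k), (if j.testBit b then ((1:ℝ)/2) ^ (b+1) else 0)
      = (∑ b ∈ Finset.range k, (if j.testBit b then ((1:ℝ)/2) ^ (b+1) else 0))
      + ∑ b ∈ Finset.Ico k (j + k), (if j.testBit b then ((1:ℝ)/2) ^ (b+1) else 0) := by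
    rw [← Finset.sum_range_add_sum_Ico _ (by omega : k ≤ j + k)]
  have hA : ∑ b ∈ Finset.range k, (if j.testBit b then ((1:ℝ)/2) ^ (b+1) else 0)
      = (lowrev k j : ℝ) / 2 ^ k := by
    unfold lowrev
    push_cast
    rw [Finset.sum_div]
    apply Finset.sum_congr rfl
    intro b hb
    have hbk : b < k := Finset.mem_range.mp hb
    have hexp : (k - 1 - b) + (b + 1) = k := by omega
    have h2 : (2:ℝ) ^ (k - 1 - b) * 2 ^ (b + 1) = 2 ^ k := by
      rw [← pow_add, hexp]
    split
    · rw [div_pow, one_pow, div_eq_div_iff (by positivity) (by positivity), one_mul,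
        ← pow_add, hexp]
    · simp
  have hT0 : 0 ≤ ∑ b ∈ Finset.Ico k (j + k), (if j.testBit b then ((1:ℝ)/2) ^ (b+1) else 0) := by
    apply Finset.sum_nonneg; intro b _; split <;> positivity
  have hT1 : ∑ b ∈ Finset.Ico k (j + k), (if j.testBit b then ((1:ℝ)/2) ^ (b+1) else 0)
      < ((1:ℝ)/2) ^ k := by
    calc _ ≤ ∑ b ∈ Finset.Ico k (j + k), ((1:ℝ)/2) ^ (b+1) := by
            apply Finset.sum_le_sum; intro b _
            split
            · exact le_rfl
            · positivity
      _ = (1/2) ^ k - (1/2) ^ (j + k) := by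
            rw [Finset.sum_Ico_eq_sub _ (by omega : k ≤ j + k), geom_half, geom_half]; ring
      _ < (1/2) ^ k := by
            have : (0:ℝ) < (1/2) ^ (j + k) := by positivity
            linarith
  have hhalf : ((1:ℝ)/2) ^ k = 1 / 2 ^ k := by
    rw [div_pow, one_pow]
  rw [hsum, hsplit, hA]
  constructor
  · linarith
  · rw [hhalf] at hT1
    have h2k : (0:ℝ) < 2 ^ k := by positivity
    rw [add_div]
    linarith

/-- `Φ[z, z+2^k)` contains exactly one element of `[i/2^k, (i+1)/2^k)`. -/
theorem stmt_16 : ∀ z k i : ℕ, i < 2 ^ k →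
    ∃! x : ℝ, (∃ j : ℕ, z ≤ j ∧ j < z + 2 ^ k ∧ vdc j = x) ∧
      (i : ℝ) / 2 ^ k ≤ x ∧ x < ((i : ℝ) + 1) / 2 ^ k := by
  intro z k i hi
  have h2k : (0:ℝ) < 2 ^ k := by positivity
  have hpos : 0 < 2 ^ k := Nat.pow_pos (by norm_num)
  -- key: in the window, vdc j lies in the interval iff lowrev k j = i
  have key : ∀ j : ℕ, ((i : ℝ) / 2 ^ k ≤ vdc j ∧ vdc j < ((i : ℝ) + 1) / 2 ^ k) ↔
      lowrev k j = i := by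
    intro j
    obtain ⟨hlo, hhi⟩ := vdc_bounds k j
    constructor
    · rintro ⟨h1, h2⟩
      have hlt1 : (lowrev k j : ℝ) < (i : ℝ) + 1 := by
        have := lt_of_le_of_lt hlo h2
        rw [div_lt_div_iff₀ h2k h2k] at this
        nlinarith
      have hlt2 : (i : ℝ) < (lowrev k j : ℝ) + 1 := by
        have := lt_of_le_of_lt h1 hhi
        rw [div_lt_div_iff₀ h2k h2k] at this
        nlinarith
      have := lowrev_lt k j
      exact_mod_cast by
        have a : lowrev k j < i + 1 := by exact_mod_cast hlt1
        have b : i < lowrev k j + 1 := by exact_mod_cast hlt2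
        omega
    · intro h
      rw [h] at hlo hhi
      exact ⟨hlo, hhi⟩
  -- window uniqueness
  have window : ∀ j1 j2 : ℕ, z ≤ j1 → j1 < z + 2 ^ k → z ≤ j2 → j2 < z + 2 ^ k →
      lowrev k j1 = i → lowrev k j2 = i → j1 = j2 := by
    intro j1 j2 ha1 hb1 ha2 hb2 he1 he2
    have hm : j1 % 2 ^ k = j2 % 2 ^ k := by
      apply lowrev_inj k _ _ (Nat.mod_lt _ hpos) (Nat.mod_lt _ hpos)
      rw [lowrev_mod, lowrev_mod, he1, he2]
    rcases le_total j1 j2 with h | h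
    · have : 2 ^ k ∣ j2 - j1 := (Nat.modEq_iff_dvd' h).mp hm
      rcases this with ⟨c, hc⟩
      rcases Nat.eq_zero_or_pos c with rfl | hcp
      · omega
      · have : 2 ^ k ≤ j2 - j1 := by calc 2 ^ k = 2 ^ k * 1 := by ring
                                         _ ≤ 2 ^ k * c := by exact Nat.mul_le_mul_left _ hcp
                                         _ = j2 - j1 := hc.symm
        omega
    · have hm' : j2 % 2 ^ k = j1 % 2 ^ k := hm.symm
      have : 2 ^ k ∣ j1 - j2 := (Nat.modEq_iff_dvd' h).mp hm'
      rcases this with ⟨c, hc⟩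
      rcases Nat.eq_zero_or_pos c with rfl | hcp
      · omega
      · have : 2 ^ k ≤ j1 - j2 := by calc 2 ^ k = 2 ^ k * 1 := by ring
                                         _ ≤ 2 ^ k * c := by exact Nat.mul_le_mul_left _ hcp
                                         _ = j1 - j2 := hc.symm
        omega
  -- existence: pick j0 with lowrev k j0 = i and shift into the window
  obtain ⟨j0, hj0lt, hj0⟩ := lowrev_surj k i hi
  set t := (j0 + 2 ^ k - z % 2 ^ k) % 2 ^ k with ht
  have htlt : t < 2 ^ k := Nat.mod_lt _ hpos
  set j := z + t with hj
  have hjmod : j % 2 ^ k = j0 := by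
    have hmodeq : j % 2 ^ k = (z + (j0 + 2 ^ k - z % 2 ^ k)) % 2 ^ k :=
      Nat.ModEq.add_left z (Nat.mod_modEq _ _)
    have hzm : z % 2 ^ k < 2 ^ k := Nat.mod_lt _ hpos
    have hdm := Nat.mod_add_div z (2 ^ k)
    have heqn : z + (j0 + 2 ^ k - z % 2 ^ k) = j0 + 2 ^ k * (z / 2 ^ k) + 2 ^ k := by omega
    rw [hmodeq, heqn, Nat.add_mod_right, Nat.add_mul_mod_self_left, Nat.mod_eq_of_lt hj0lt]
  have hlj : lowrev k j = i := by rw [← lowrev_mod, hjmod, hj0]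
  refine ⟨vdc j, ⟨⟨j, by omega, by omega, rfl⟩, (key j).mpr hlj⟩, ?_⟩
  rintro y ⟨⟨j', ha', hb', rfl⟩, hy⟩
  have : j' = j := window j' j ha' hb' (by omega) (by omega) ((key j').mp hy) hlj
  rw [this]
end
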